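/- Let gᵢ : ℝᵈ → ℝ (i = 1,...,N) each be differentiable with Lᵢ/N-Lipschitz gradient (in the sense ‖∇gᵢ(x)−∇gᵢ(y)‖ ≤ Lᵢ‖x−y‖), let ηᵢ ≥ Lᵢ/N, xᵢ ∈ ℝᵈ, z ∈ ℝᵈ, λᵢ = −(1/N)∇gᵢ(xᵢ), and h, g₀ with g₀ + ∑ᵢ(1/N)gᵢ + h bounded below by f̲. Then the augmented Lagrangian L(x,z,λ) = ∑ᵢ[(1/N)gᵢ(xᵢ) + ⟨λᵢ, xᵢ−z⟩ + (ηᵢ/2)‖xᵢ−z‖²] + g₀(z) + h(z) satisfies L(x,z,λ) ≥ f̲. -/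

import Mathlib

open InnerProductSpace

lemma descent_lemma {d : ℕ} (g : EuclideanSpace ℝ (Fin d) → ℝ)
    (g' : EuclideanSpace ℝ (Fin d) → EuclideanSpace ℝ (Fin d)) (L : ℝ)
    (hdiff : ∀ x, HasGradientAt g (g' x) x)
    (hlip : ∀ x y, ‖g' x - g' y‖ ≤ L * ‖x - y‖)
    (x y : EuclideanSpace ℝ (Fin d)) :
    g y ≤ g x + (inner ℝ (g' x) (y - x) : ℝ) + L / 2 * ‖y - x‖ ^ 2 := by
  set v := y - x with hv
  set c : ℝ → EuclideanSpace ℝ (Fin d) := fun t => x + t • v with hc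
  have hcd : ∀ t : ℝ, HasDerivAt c v t := by
    intro t
    simpa [hc] using ((hasDerivAt_id t).smul_const v).const_add x
  set φ : ℝ → ℝ := fun t => g (c t) - t * (inner ℝ (g' x) v : ℝ) with hφ
  set φ' : ℝ → ℝ := fun t => (inner ℝ (g' (c t)) v : ℝ) - (inner ℝ (g' x) v : ℝ) with hφ'
  have hφd : ∀ t : ℝ, HasDerivAt φ (φ' t) t := by
    intro t
    have h1 : HasDerivAt (fun t => g (c t)) ((inner ℝ (g' (c t)) v : ℝ)) t := by
      have := ((hdiff (c t)).hasFDerivAt).comp_hasDerivAt t (hcd t)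
      exact this
    exact (h1.sub ((hasDerivAt_id' t).mul_const (inner ℝ (g' x) v))).congr_deriv (by simp [hφ'])
  set B : ℝ → ℝ := fun t => g x + L / 2 * ‖v‖ ^ 2 * t ^ 2 with hB
  set B' : ℝ → ℝ := fun t => L * ‖v‖ ^ 2 * t with hB'
  have hBd : ∀ t : ℝ, HasDerivAt B (B' t) t := by
    intro t
    have := (((hasDerivAt_id t).pow 2).const_mul (L / 2 * ‖v‖ ^ 2)).const_add (g x)
    convert this using 1
    · rfl
    · rfl
    · rfl
    simp [hB']; ring
  have key : φ 1 ≤ B 1 := by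
    have := image_le_of_deriv_right_le_deriv_boundary (a := 0) (b := 1)
      (fun t _ => (hφd t).continuousAt.continuousWithinAt)
      (fun t _ => (hφd t).hasDerivWithinAt)
      (by simp [hφ, hB, hc]) (fun t _ => (hBd t).continuousAt.continuousWithinAt)
      (fun t _ => (hBd t).hasDerivWithinAt)
      (fun t ht => ?_) (Set.right_mem_Icc.2 zero_le_one)
    · exact this
    · have h1 : φ' t = (inner ℝ (g' (c t) - g' x) v : ℝ) := by
        simp [hφ', inner_sub_left]
      rw [h1]
      calc (inner ℝ (g' (c t) - g' x) v : ℝ) ≤ ‖g' (c t) - g' x‖ * ‖v‖ :=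
            real_inner_le_norm _ _
        _ ≤ (L * ‖c t - x‖) * ‖v‖ := by
            apply mul_le_mul_of_nonneg_right (hlip _ _) (norm_nonneg _)
        _ = B' t := by
            have : c t - x = t • v := by simp [hc]
            rw [this, norm_smul, Real.norm_eq_abs, abs_of_nonneg ht.1]
            simp [hB']; ring
  have h1 : φ 1 = g y - (inner ℝ (g' x) v : ℝ) := by simp [hφ, hc, hv]
  have h2 : B 1 = g x + L / 2 * ‖v‖ ^ 2 := by simp [hB]
  rw [h1, h2] at key
  linarith

/-- The augmented Lagrangian with λᵢ = −(1/N)∇gᵢ(xᵢ) and ηᵢ ≥ Lᵢ/N is bounded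
below by the lower bound f̲ of the objective. -/
theorem aug_lagrangian_lower_bound {d N : ℕ} (hN : 0 < N)
    (g : Fin N → EuclideanSpace ℝ (Fin d) → ℝ)
    (g' : Fin N → EuclideanSpace ℝ (Fin d) → EuclideanSpace ℝ (Fin d))
    (L : Fin N → ℝ)
    (hdiff : ∀ i x, HasGradientAt (g i) (g' i x) x)
    (hlip : ∀ i x y, ‖g' i x - g' i y‖ ≤ L i * ‖x - y‖)
    (η : Fin N → ℝ) (hη : ∀ i, L i / N ≤ η i)
    (x : Fin N → EuclideanSpace ℝ (Fin d)) (z : EuclideanSpace ℝ (Fin d))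
    (lam : Fin N → EuclideanSpace ℝ (Fin d))
    (hlam : ∀ i, lam i = -((1 : ℝ) / N) • g' i (x i))
    (g₀ h : EuclideanSpace ℝ (Fin d) → ℝ) (fbar : ℝ)
    (hbound : ∀ w, fbar ≤ (1 / N) * ∑ i, g i w + g₀ w + h w) :
    fbar ≤ (∑ i, ((1 / N) * g i (x i) + (inner ℝ (lam i) (x i - z) : ℝ)
              + η i / 2 * ‖x i - z‖ ^ 2)) + g₀ z + h z := by
  have hNpos : (0 : ℝ) < N := Nat.cast_pos.2 hN
  have key : ∀ i, (1 / N : ℝ) * g i z ≤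
      (1 / N) * g i (x i) + (inner ℝ (lam i) (x i - z) : ℝ) + η i / 2 * ‖x i - z‖ ^ 2 := by
    intro i
    have hd := descent_lemma (g i) (g' i) (L i) (hdiff i) (hlip i) (x i) z
    have hinner : (inner ℝ (lam i) (x i - z) : ℝ) =
        (1 / N : ℝ) * (inner ℝ (g' i (x i)) (z - x i) : ℝ) := by
      rw [hlam i, inner_smul_left]
      have : x i - z = -(z - x i) := by abel
      rw [this, inner_neg_right]
      simp [starRingEnd_apply]
    have hn : ‖x i - z‖ = ‖z - x i‖ := by rw [← norm_neg]; congr 1; abel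
    have hsq : (0 : ℝ) ≤ ‖z - x i‖ ^ 2 := sq_nonneg _
    have hmul := mul_le_mul_of_nonneg_left hd (by positivity : (0:ℝ) ≤ 1 / N)
    have hη' : L i / N / 2 * ‖z - x i‖ ^ 2 ≤ η i / 2 * ‖z - x i‖ ^ 2 := by
      apply mul_le_mul_of_nonneg_right _ hsq
      linarith [hη i]
    rw [hinner, hn]
    have : (1 / N : ℝ) * (L i / 2 * ‖z - x i‖ ^ 2) = L i / N / 2 * ‖z - x i‖ ^ 2 := by
      field_simp
    nlinarith [hmul]
  calc fbar ≤ (1 / N) * ∑ i, g i z + g₀ z + h z := hbound z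
    _ ≤ _ := by
        rw [Finset.mul_sum]
        have h2 := Finset.sum_le_sum (fun i (_ : i ∈ Finset.univ) => key i)
        linarith
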